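/- If κ is an uncountable cardinal and there exists a nonprincipal σ-complete (countably complete) ultrafilter on κ, then there exists a strongly inaccessible cardinal λ with λ ≤ κ. -/

import Mathlib

open Cardinal Set

universe u

namespace UlamAux

/-- σ-completeness of an ultrafilter. -/
def SigmaComplete {β : Type u} (U : Ultrafilter β) : Prop :=
  ∀ s : ℕ → Set β, (∀ n, s n ∈ U) → (⋂ n, s n) ∈ U

/-- Nonprincipality of an ultrafilter. -/
def NonPrincipal {β : Type u} (U : Ultrafilter β) : Prop :=
  ∀ x, ({x} : Set β) ∉ U

/-- Cardinals of types carrying a nonprincipal σ-complete ultrafilter. -/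
def MeasSet : Set Cardinal.{u} :=
  {c | ∃ (β : Type u) (U : Ultrafilter β), #β = c ∧ SigmaComplete U ∧ NonPrincipal U}

theorem aleph0_lt_of_mem {c : Cardinal.{u}} (hc : c ∈ MeasSet) : ℵ₀ < c := by
  obtain ⟨β, U, rfl, hσ, hnp⟩ := hc
  by_contra h
  push_neg at h
  have : Countable β := Cardinal.mk_le_aleph0_iff.mp h
  have : Nonempty β := Filter.nonempty_of_neBot (U : Filter β)
  obtain ⟨g, hg⟩ := exists_surjective_nat β
  have hmem : ∀ n, ({g n} : Set β)ᶜ ∈ U := fun n =>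
    (Ultrafilter.compl_mem_iff_notMem).mpr (hnp (g n))
  have := hσ (fun n => ({g n} : Set β)ᶜ) hmem
  have hempty : (⋂ n, ({g n} : Set β)ᶜ) = ∅ := by
    ext x
    simp only [mem_iInter, mem_compl_iff, mem_singleton_iff, mem_empty_iff_false,
      iff_false, not_forall, not_not]
    obtain ⟨n, hn⟩ := hg x
    exact ⟨n, hn.symm⟩
  rw [hempty] at this
  exact Ultrafilter.empty_notMem this

/-- Key completeness lemma: a witness of the minimal cardinal in `MeasSet` is
`λ`-complete. -/
theorem inter_mem {β : Type u} (U : Ultrafilter β) (hσ : SigmaComplete U)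
    (hnp : NonPrincipal U) (hmin : #β = sInf MeasSet)
    {ι : Type u} (hι : #ι < sInf MeasSet) (A : ι → Set β)
    (hA : ∀ i, A i ∈ U) : (⋂ i, A i) ∈ U := by
  by_contra hI
  rcases isEmpty_or_nonempty ι with hE | hN
  · rw [iInter_of_empty] at hI
    exact hI Filter.univ_mem
  have hUnion : (⋃ i, (A i)ᶜ) ∈ U := by
    have : (⋂ i, A i)ᶜ ∈ U := (Ultrafilter.compl_mem_iff_notMem).mpr hI
    rwa [compl_iInter] at this
  -- well-order ι and map each point to the least index of a bad set containing it
  haveI : IsWellOrder ι WellOrderingRel := WellOrderingRel.isWellOrder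
  have wf : WellFounded (WellOrderingRel : ι → ι → Prop) :=
    IsWellFounded.wf
  classical
  set f : β → ι := fun x =>
    if h : ∃ i, x ∈ (A i)ᶜ then wf.min {i | x ∈ (A i)ᶜ} h else Classical.arbitrary ι
    with hf
  set V : Ultrafilter ι := U.map f with hV
  have hVσ : SigmaComplete V := by
    intro s hs
    have : ∀ n, f ⁻¹' s n ∈ U := fun n => hs n
    have := hσ (fun n => f ⁻¹' s n) this
    rwa [← preimage_iInter] at this
  have hVnp : NonPrincipal V := by
    intro i hi
    have hpre : f ⁻¹' {i} ∈ U := hi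
    have hsub : f ⁻¹' {i} ⊆ (A i)ᶜ ∪ (⋃ j, (A j)ᶜ)ᶜ := by
      intro x hx
      simp only [mem_preimage, mem_singleton_iff] at hx
      by_cases h : ∃ j, x ∈ (A j)ᶜ
      · left
        have := wf.min_mem {j | x ∈ (A j)ᶜ} h
        rw [hf] at hx
        simp only [dif_pos h] at hx
        rwa [hx] at this
      · right
        simp only [mem_compl_iff, mem_iUnion, not_exists]
        intro j hj
        exact h ⟨j, hj⟩
    have : (A i)ᶜ ∪ (⋃ j, (A j)ᶜ)ᶜ ∈ U := Filter.mem_of_superset hpre hsub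
    rcases (Ultrafilter.union_mem_iff.mp this) with h | h
    · exact ((Ultrafilter.compl_mem_iff_notMem).mp h) (hA i)
    · exact ((Ultrafilter.compl_mem_iff_notMem).mp h) hUnion
  have : #ι ∈ MeasSet := ⟨ι, V, rfl, hVσ, hVnp⟩
  exact absurd (csInf_le' this) (not_le.mpr hι)

/-- Sets of size `< λ` are null. -/
theorem small_not_mem {β : Type u} (U : Ultrafilter β) (hσ : SigmaComplete U)
    (hnp : NonPrincipal U) (hmin : #β = sInf MeasSet)
    {T : Set β} (hT : #T < sInf MeasSet) : T ∉ U := by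
  intro hTU
  have hA : ∀ t : T, ({(t : β)} : Set β)ᶜ ∈ U := fun t =>
    (Ultrafilter.compl_mem_iff_notMem).mpr (hnp t)
  have h := inter_mem U hσ hnp hmin hT (fun t : T => ({(t : β)} : Set β)ᶜ) hA
  have heq : (⋂ t : T, ({(t : β)} : Set β)ᶜ) = Tᶜ := by
    ext x
    simp only [mem_iInter, mem_compl_iff, mem_singleton_iff]
    constructor
    · intro hx hxT
      exact hx ⟨x, hxT⟩ rfl
    · intro hx t ht
      exact hx (ht ▸ t.2)
  rw [heq] at h
  exact (Ultrafilter.compl_mem_iff_notMem).mp h hTU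

/-- Unions of fewer than `λ` null sets are null. -/
theorem union_not_mem {β : Type u} (U : Ultrafilter β) (hσ : SigmaComplete U)
    (hnp : NonPrincipal U) (hmin : #β = sInf MeasSet)
    {ι : Type u} (hι : #ι < sInf MeasSet) (T : ι → Set β)
    (hT : ∀ i, T i ∉ U) : (⋃ i, T i) ∉ U := by
  intro h
  have hA : ∀ i, (T i)ᶜ ∈ U := fun i => (Ultrafilter.compl_mem_iff_notMem).mpr (hT i)
  have := inter_mem U hσ hnp hmin hι (fun i => (T i)ᶜ) hA
  rw [← compl_iUnion] at this
  exact (Ultrafilter.compl_mem_iff_notMem).mp this h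

end UlamAux

/-- Ulam's theorem: if `κ` is an uncountable cardinal carrying a nonprincipal
σ-complete (countably complete) ultrafilter, then there is a strongly
inaccessible cardinal `≤ κ`. -/
theorem ulam_inaccessible {α : Type*} (hα : Cardinal.aleph0 < Cardinal.mk α)
    (U : Ultrafilter α)
    (hcc : ∀ s : ℕ → Set α, (∀ n, s n ∈ U) → (⋂ n, s n) ∈ U)
    (hnp : ∀ x : α, ({x} : Set α) ∉ U) :
    ∃ lam : Cardinal, lam.IsInaccessible ∧ lam ≤ Cardinal.mk α := by
  classical
  open UlamAux in
  have hmem : #α ∈ MeasSet := ⟨α, U, rfl, hcc, hnp⟩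
  have hne : MeasSet.Nonempty := ⟨#α, hmem⟩
  set lam := sInf MeasSet with hlam
  have hlam_le : lam ≤ #α := csInf_le' hmem
  have hlam_mem : lam ∈ MeasSet := csInf_mem hne
  have hℵ₀ : ℵ₀ < lam := aleph0_lt_of_mem hlam_mem
  obtain ⟨β, W, hβ, hσ, hnpW⟩ := hlam_mem
  refine ⟨lam, Cardinal.IsInaccessible.mk hℵ₀ ?_ ?_, hlam_le⟩
  · -- regularity
    by_contra hreg
    push_neg at hreg
    -- move the ultrafilter onto `lam.ord.toType`
    set γ := lam.ord.ToType with hγ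
    have hγcard : #γ = lam := by rw [hγ, Cardinal.mk_toType, Cardinal.card_ord]
    obtain ⟨e⟩ : Nonempty (β ≃ γ) := Cardinal.eq.mp (hβ.trans hγcard.symm)
    set V : Ultrafilter γ := W.map e with hVdef
    have hVσ : SigmaComplete V := by
      intro s hs
      have := hσ (fun n => e ⁻¹' s n) (fun n => hs n)
      rwa [← preimage_iInter] at this
    have hVnp : NonPrincipal V := by
      intro x hx
      have h1 : e ⁻¹' {x} ∈ W := hx
      have heq : e ⁻¹' {x} = {e.symm x} := by
        ext y
        simp [Equiv.eq_symm_apply]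
      rw [heq] at h1
      exact hnpW _ h1
    haveI : IsWellOrder γ ((· < ·) : γ → γ → Prop) :=
      isWellOrder_lt
    obtain ⟨S, hSub, hScard⟩ := Order.exists_cof_eq γ
    rw [Ordinal.cof_toType] at hScard
    have hS : #S < lam := by rw [hScard]; exact hreg
    have hIic : ∀ s : S, (Set.Iic (s : γ)) ∉ V := by
      intro s
      apply small_not_mem V hVσ hVnp (hγcard.trans hlam)
      have h1 : #(Set.Iic (s : γ)) ≤ #(Set.Iio (s : γ)) + 1 := by
        have : Set.Iic (s : γ) = insert (s : γ) (Set.Iio (s : γ)) := by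
          ext x; simp [le_iff_lt_or_eq, or_comm]
        rw [this]
        exact Cardinal.mk_insert_le
      refine lt_of_le_of_lt h1 (Cardinal.add_lt_of_lt hℵ₀.le ?_ ?_)
      · exact Cardinal.mk_Iio_toType_ord_lt (s : γ)
      · exact lt_trans Cardinal.one_lt_aleph0 hℵ₀
    have huniv : (⋃ s : S, Set.Iic (s : γ)) = Set.univ := by
      ext x
      simp only [mem_iUnion, mem_Iic, mem_univ, iff_true]
      obtain ⟨b, hbS, hb⟩ := hSub x
      exact ⟨⟨b, hbS⟩, hb⟩
    have := union_not_mem V hVσ hVnp (hγcard.trans hlam) hS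
      (fun s : S => Set.Iic (s : γ)) hIic
    rw [huniv] at this
    exact this Filter.univ_mem
  · -- strong limit
    intro μ hμ
    by_contra hpow
    push_neg at hpow
    -- lam ≤ 2 ^ μ, get an injection of β into functions ι → Bool
    set ι := μ.out with hι
    have hιcard : #ι = μ := Cardinal.mk_out μ
    have hle : #β ≤ #(Set ι) := by
      rw [hβ, Cardinal.mk_set, hιcard]; exact hpow
    obtain ⟨g⟩ := hle
    set b : Set ι := {i | {x : β | i ∈ g x} ∈ W} with hb
    have hSmem : ∀ i : ι, {x : β | i ∈ g x ↔ i ∈ b} ∈ W := by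
      intro i
      by_cases h : {x : β | i ∈ g x} ∈ W
      · have hib : i ∈ b := h
        have heq : {x : β | i ∈ g x ↔ i ∈ b} = {x : β | i ∈ g x} := by
          ext x; simp [hib]
        rw [heq]; exact h
      · have hib : i ∉ b := h
        have hc : {x : β | i ∈ g x}ᶜ ∈ W := (Ultrafilter.compl_mem_iff_notMem).mpr h
        have heq : {x : β | i ∈ g x ↔ i ∈ b} = {x : β | i ∈ g x}ᶜ := by
          ext x; simp [hib]
        rw [heq]; exact hc
    have hικ : #ι < lam := by rw [hιcard]; exact hμ
    have hint := inter_mem W hσ hnpW (hβ.trans hlam) hικ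
      (fun i => {x : β | i ∈ g x ↔ i ∈ b}) hSmem
    obtain ⟨x₀, hx₀⟩ := Ultrafilter.nonempty_of_mem hint
    have hsub : (⋂ i, {x : β | i ∈ g x ↔ i ∈ b}) ⊆ {x₀} := by
      intro y hy
      simp only [mem_iInter, mem_setOf_eq] at hy hx₀
      have : g y = g x₀ := by
        ext i; rw [hy i, hx₀ i]
      have := g.injective this
      simp [this]
    exact hnpW x₀ (Filter.mem_of_superset hint hsub)
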